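/- Invariance of C_ub and C_rub: let t > 0. If v : ℝ^d → ℂ is bounded and uniformly continuous, then T(t)v is bounded and uniformly continuous. If in addition lim_{τ→0} sup_{x∈ℝ^d} |v(e^{τS}x) − v(x)| = 0, then also lim_{τ→0} sup_{x∈ℝ^d} |[T(t)v](e^{τS}x) − [T(t)v](x)| = 0; more precisely, sup_{x∈ℝ^d} |[T(t)v](e^{τS}x) − [T(t)v](x)| ≤ a₁^{d/2} e^{−b₀ t} · sup_{x∈ℝ^d} |v(e^{τS}x) − v(x)| for every τ ∈ ℝ. -/

import Mathlib

open MeasureTheory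

/-- Rotation `e^{tS}x` given by the matrix exponential. -/
noncomputable def ouRot (d : ℕ) (S : Matrix (Fin d) (Fin d) ℝ) (t : ℝ)
    (x : EuclideanSpace ℝ (Fin d)) : EuclideanSpace ℝ (Fin d) :=
  WithLp.toLp 2 (Matrix.mulVec (NormedSpace.exp (t • S)) x)

/-- The scalar complex Ornstein--Uhlenbeck kernel. -/
noncomputable def ouH (d : ℕ) (α δ : ℂ) (S : Matrix (Fin d) (Fin d) ℝ)
    (x ξ : EuclideanSpace ℝ (Fin d)) (t : ℝ) : ℂ :=
  (4 * (Real.pi : ℂ) * α * t) ^ (-(d : ℂ) / 2) *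
    Complex.exp (-(δ * t) - ((‖ouRot d S t x - ξ‖ ^ 2 : ℝ) : ℂ) / (4 * α * t))

/-- The Ornstein--Uhlenbeck semigroup for `t > 0`. -/
noncomputable def ouT (d : ℕ) (α δ : ℂ) (S : Matrix (Fin d) (Fin d) ℝ) (t : ℝ)
    (v : EuclideanSpace ℝ (Fin d) → ℂ) (x : EuclideanSpace ℝ (Fin d)) : ℂ :=
  ∫ ξ : EuclideanSpace ℝ (Fin d), ouH d α δ S x ξ t * v ξ

lemma ouExp_add (d : ℕ) (S : Matrix (Fin d) (Fin d) ℝ) (a b : ℝ) :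
    NormedSpace.exp ((a + b) • S) = NormedSpace.exp (a • S) * NormedSpace.exp (b • S) := by
  rw [add_smul]
  exact Matrix.exp_add_of_commute _ _ (((Commute.refl S).smul_left a).smul_right b)

lemma ouRot_add (d : ℕ) (S : Matrix (Fin d) (Fin d) ℝ) (a b : ℝ) (x : EuclideanSpace ℝ (Fin d)) :
    ouRot d S a (ouRot d S b x) = ouRot d S (a + b) x := by
  unfold ouRot
  simp only [WithLp.ofLp_toLp, Matrix.mulVec_mulVec]
  rw [ouExp_add]

lemma ouRot_zero (d : ℕ) (S : Matrix (Fin d) (Fin d) ℝ) (x : EuclideanSpace ℝ (Fin d)) :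
    ouRot d S 0 x = x := by
  unfold ouRot
  rw [zero_smul, NormedSpace.exp_zero, Matrix.one_mulVec, WithLp.toLp_ofLp]

lemma ouRot_orth (d : ℕ) {S : Matrix (Fin d) (Fin d) ℝ} (hS : S.transpose = -S) (τ : ℝ) :
    (NormedSpace.exp (τ • S)).transpose * NormedSpace.exp (τ • S) = 1 := by
  have h1 : (τ • S).transpose = (-τ) • S := by
    rw [Matrix.transpose_smul, hS, smul_neg, ← neg_smul]
  rw [← Matrix.exp_transpose, h1, ← ouExp_add, neg_add_cancel, zero_smul,
    NormedSpace.exp_zero]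

lemma ouRot_norm (d : ℕ) {S : Matrix (Fin d) (Fin d) ℝ} (hS : S.transpose = -S) (τ : ℝ)
    (x : EuclideanSpace ℝ (Fin d)) : ‖ouRot d S τ x‖ = ‖x‖ := by
  set M := NormedSpace.exp (τ • S) with hM
  have key : dotProduct (M.mulVec x) (M.mulVec x) = dotProduct x x := by
    rw [Matrix.dotProduct_mulVec, ← Matrix.mulVec_transpose, Matrix.mulVec_mulVec,
      ouRot_orth d hS τ, Matrix.one_mulVec]
  rw [EuclideanSpace.norm_eq, EuclideanSpace.norm_eq]
  congr 1
  simpa [ouRot, ← hM, dotProduct, sq_abs, pow_two] using key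

/-- The rotation as a linear isometry equivalence. -/
noncomputable def ouRotE (d : ℕ) {S : Matrix (Fin d) (Fin d) ℝ} (hS : S.transpose = -S) (τ : ℝ) :
    EuclideanSpace ℝ (Fin d) ≃ₗᵢ[ℝ] EuclideanSpace ℝ (Fin d) where
  toFun := ouRot d S τ
  invFun := ouRot d S (-τ)
  map_add' x y := by simp [ouRot, Matrix.mulVec_add]
  map_smul' c x := by simp [ouRot, Matrix.mulVec_smul]
  left_inv x := by show ouRot d S (-τ) (ouRot d S τ x) = x; rw [ouRot_add, neg_add_cancel, ouRot_zero]
  right_inv x := by show ouRot d S τ (ouRot d S (-τ) x) = x; rw [ouRot_add, add_neg_cancel, ouRot_zero]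
  norm_map' x := ouRot_norm d hS τ x

lemma ouRot_measurePreserving (d : ℕ) {S : Matrix (Fin d) (Fin d) ℝ}
    (hS : S.transpose = -S) (τ : ℝ) :
    MeasurePreserving (ouRot d S τ)
      (volume : Measure (EuclideanSpace ℝ (Fin d))) volume :=
  (ouRotE d hS τ).measurePreserving

lemma ouRot_integral_comp (d : ℕ) {S : Matrix (Fin d) (Fin d) ℝ}
    (hS : S.transpose = -S) (τ : ℝ) (f : EuclideanSpace ℝ (Fin d) → ℂ) :
    ∫ η, f (ouRot d S τ η) = ∫ η, f η :=
  (ouRot_measurePreserving d hS τ).integral_comp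
    (ouRotE d hS τ).toHomeomorph.measurableEmbedding f

/-- The kernel as a function of the difference variable. -/
noncomputable def ouG (d : ℕ) (α δ : ℂ) (t : ℝ) (η : EuclideanSpace ℝ (Fin d)) : ℂ :=
  (4 * (Real.pi : ℂ) * α * t) ^ (-(d : ℂ) / 2) *
    Complex.exp (-(δ * t) - ((‖η‖ ^ 2 : ℝ) : ℂ) / (4 * α * t))

lemma ouH_eq_ouG (d : ℕ) (α δ : ℂ) (S : Matrix (Fin d) (Fin d) ℝ)
    (x ξ : EuclideanSpace ℝ (Fin d)) (t : ℝ) :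
    ouH d α δ S x ξ t = ouG d α δ t (ouRot d S t x - ξ) := rfl

lemma ouG_norm_eq (d : ℕ) (α δ : ℂ) (t : ℝ) {η η' : EuclideanSpace ℝ (Fin d)}
    (h : ‖η‖ = ‖η'‖) : ouG d α δ t η = ouG d α δ t η' := by
  unfold ouG; rw [h]

/-- The real Gaussian decay rate. -/
noncomputable def ouc (α : ℂ) (t : ℝ) : ℝ := α.re / (4 * ‖α‖ ^ 2 * t)

lemma ouc_pos {α : ℂ} (hα : 0 < α.re) {t : ℝ} (ht : 0 < t) : 0 < ouc α t := by
  have habs : 0 < ‖α‖ := by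
    rw [norm_pos_iff]
    intro h; rw [h] at hα; simp at hα
  unfold ouc; positivity

lemma abs_ouG (d : ℕ) {α : ℂ} (δ : ℂ) (hα : 0 < α.re) {t : ℝ} (ht : 0 < t)
    (η : EuclideanSpace ℝ (Fin d)) :
    ‖ouG d α δ t η‖ =
      (4 * Real.pi * ‖α‖ * t) ^ (-(d : ℝ) / 2) * Real.exp (-δ.re * t) *
        Real.exp (-(ouc α t * ‖η‖ ^ 2)) := by
  have habs : 0 < ‖α‖ := by
    rw [norm_pos_iff]
    intro h; rw [h] at hα; simp at hα
  have hz : (4 * (Real.pi : ℂ) * α * t) ≠ 0 := by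
    have : ‖4 * (Real.pi : ℂ) * α * t‖ = 4 * Real.pi * ‖α‖ * t := by
      simp [map_mul, Complex.norm_real, abs_of_pos Real.pi_pos, abs_of_pos ht]
    intro h
    rw [h, norm_zero] at this
    have hpos : 0 < 4 * Real.pi * ‖α‖ * t := by positivity
    rw [this] at hpos; exact lt_irrefl _ hpos
  have habsz : ‖4 * (Real.pi : ℂ) * α * t‖ = 4 * Real.pi * ‖α‖ * t := by
    simp [map_mul, Complex.norm_real, abs_of_pos Real.pi_pos, abs_of_pos ht]
  have hre : (((‖η‖ ^ 2 : ℝ) : ℂ) / (4 * α * t)).re = ouc α t * ‖η‖ ^ 2 := by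
    have h4 : (4 : ℂ) * α * (t : ℂ) = ((4 * t : ℝ) : ℂ) * α := by push_cast; ring
    rw [div_eq_mul_inv, Complex.re_ofReal_mul, h4, Complex.inv_re, Complex.re_ofReal_mul,
      Complex.normSq_mul, Complex.normSq_ofReal, ← Complex.sq_norm]
    unfold ouc
    field_simp
  rw [ouG, norm_mul, Complex.norm_cpow_of_ne_zero hz, habsz, Complex.norm_exp]
  have him : ((-(d : ℂ)) / 2).im = 0 := by simp
  have hre2 : ((-(d : ℂ)) / 2).re = -(d : ℝ) / 2 := by simp
  rw [him, hre2, mul_zero, Real.exp_zero, div_one]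
  rw [Complex.sub_re, Complex.neg_re, Complex.mul_re, Complex.ofReal_re, Complex.ofReal_im,
    hre]
  simp only [mul_zero, sub_zero]
  rw [sub_eq_add_neg, Real.exp_add]
  ring_nf


lemma continuous_ouG (d : ℕ) (α δ : ℂ) (t : ℝ) : Continuous (ouG d α δ t) := by
  unfold ouG
  exact continuous_const.mul (Complex.continuous_exp.comp (continuous_const.sub
    ((Complex.continuous_ofReal.comp (continuous_norm.pow 2)).div_const _)))

lemma integrable_gauss (d : ℕ) {c : ℝ} (hc : 0 < c) :
    Integrable (fun η : EuclideanSpace ℝ (Fin d) => Real.exp (-(c * ‖η‖ ^ 2))) := by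
  have h := (GaussianFourier.integrable_cexp_neg_mul_sq_norm_add
      (V := EuclideanSpace ℝ (Fin d)) (b := (c : ℂ)) (by simpa using hc) 0 0).norm
  convert h using 2 with η
  rw [Complex.norm_exp]
  norm_num [Complex.re_ofReal_mul, ← Complex.ofReal_pow]

lemma integral_gauss (d : ℕ) {c : ℝ} (hc : 0 < c) :
    ∫ η : EuclideanSpace ℝ (Fin d), Real.exp (-(c * ‖η‖ ^ 2)) =
      (Real.pi / c) ^ ((d : ℝ) / 2) := by
  have h := GaussianFourier.integral_rexp_neg_mul_sq_norm (V := EuclideanSpace ℝ (Fin d)) hc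
  simp_rw [neg_mul] at h
  rw [h, finrank_euclideanSpace_fin]

lemma integral_abs_ouG (d : ℕ) {α : ℂ} (δ : ℂ) (hα : 0 < α.re) {t : ℝ} (ht : 0 < t) :
    ∫ η : EuclideanSpace ℝ (Fin d), ‖ouG d α δ t η‖ =
      (‖α‖ / α.re) ^ ((d : ℝ) / 2) * Real.exp (-δ.re * t) := by
  have habs : 0 < ‖α‖ := by
    rw [norm_pos_iff]
    intro h; rw [h] at hα; simp at hα
  have hx : (0 : ℝ) < 4 * Real.pi * ‖α‖ * t := by positivity
  have hy : (0 : ℝ) < Real.pi / ouc α t := by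
    have := ouc_pos hα ht; positivity
  simp_rw [abs_ouG d δ hα ht]
  rw [integral_const_mul, integral_gauss d (ouc_pos hα ht)]
  have hyx : Real.pi / ouc α t / (4 * Real.pi * ‖α‖ * t) =
      ‖α‖ / α.re := by
    unfold ouc
    field_simp
  have key : (4 * Real.pi * ‖α‖ * t) ^ (-(d : ℝ) / 2) *
      (Real.pi / ouc α t) ^ ((d : ℝ) / 2) = (‖α‖ / α.re) ^ ((d : ℝ) / 2) := by
    rw [neg_div, Real.rpow_neg hx.le, inv_mul_eq_div, ← Real.div_rpow hy.le hx.le, hyx]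
  rw [mul_assoc, mul_comm (Real.exp _), ← mul_assoc, key]

lemma integrable_ouG_mul (d : ℕ) {α : ℂ} (δ : ℂ) (hα : 0 < α.re) {t : ℝ} (ht : 0 < t)
    {w : EuclideanSpace ℝ (Fin d) → ℂ} (hw : Continuous w) {C : ℝ}
    (hC : ∀ y, ‖w y‖ ≤ C) :
    Integrable (fun η => ouG d α δ t η * w η) := by
  set B := (4 * Real.pi * ‖α‖ * t) ^ (-(d : ℝ) / 2) * Real.exp (-δ.re * t) with hB
  have habs : 0 < ‖α‖ := by
    rw [norm_pos_iff]
    intro h; rw [h] at hα; simp at hα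
  have hB0 : 0 ≤ B := by positivity
  apply Integrable.mono' (g := fun η => (B * C) * Real.exp (-(ouc α t * ‖η‖ ^ 2)))
  · exact (integrable_gauss d (ouc_pos hα ht)).const_mul _
  · exact ((continuous_ouG d α δ t).mul hw).aestronglyMeasurable
  · filter_upwards with η
    rw [norm_mul, abs_ouG d δ hα ht]
    have h1 : ‖w η‖ ≤ C := hC η
    have h2 : (0:ℝ) ≤ Real.exp (-(ouc α t * ‖η‖ ^ 2)) := (Real.exp_pos _).le
    calc B * Real.exp (-(ouc α t * ‖η‖ ^ 2)) * ‖w η‖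
        ≤ B * Real.exp (-(ouc α t * ‖η‖ ^ 2)) * C := by
          apply mul_le_mul_of_nonneg_left h1; positivity
      _ = (B * C) * Real.exp (-(ouc α t * ‖η‖ ^ 2)) := by ring

lemma integrable_abs_ouG (d : ℕ) {α : ℂ} (δ : ℂ) (hα : 0 < α.re) {t : ℝ} (ht : 0 < t) :
    Integrable (fun η : EuclideanSpace ℝ (Fin d) => ‖ouG d α δ t η‖) := by
  have h := (integrable_ouG_mul d δ hα ht (w := fun _ => 1) continuous_const (C := 1)
    (fun y => by simp)).norm
  simpa using h

lemma abs_integral_ouG_mul_le (d : ℕ) {α : ℂ} (δ : ℂ) (hα : 0 < α.re) {t : ℝ} (ht : 0 < t)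
    {w : EuclideanSpace ℝ (Fin d) → ℂ} (hw : Continuous w) {C : ℝ}
    (hC : ∀ y, ‖w y‖ ≤ C) :
    ‖∫ η, ouG d α δ t η * w η‖ ≤
      (‖α‖ / α.re) ^ ((d : ℝ) / 2) * Real.exp (-δ.re * t) * C := by
  calc ‖∫ η, ouG d α δ t η * w η‖
      ≤ ∫ η, ‖ouG d α δ t η * w η‖ := norm_integral_le_integral_norm _
    _ ≤ ∫ η, ‖ouG d α δ t η‖ * C := by
        apply integral_mono (integrable_ouG_mul d δ hα ht hw hC).norm
          ((integrable_abs_ouG d δ hα ht).mul_const C)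
        intro η
        show ‖ouG d α δ t η * w η‖ ≤ ‖ouG d α δ t η‖ * C
        rw [norm_mul]
        exact mul_le_mul_of_nonneg_left (hC η) (norm_nonneg _)
    _ = (∫ η, ‖ouG d α δ t η‖) * C := by rw [integral_mul_const]
    _ = (‖α‖ / α.re) ^ ((d : ℝ) / 2) * Real.exp (-δ.re * t) * C := by
        rw [integral_abs_ouG d δ hα ht]


set_option maxHeartbeats 1000000 in
lemma ouT_eq (d : ℕ) (α δ : ℂ) (S : Matrix (Fin d) (Fin d) ℝ) (t : ℝ)
    (v : EuclideanSpace ℝ (Fin d) → ℂ) (x : EuclideanSpace ℝ (Fin d)) :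
    ouT d α δ S t v x = ∫ η, ouG d α δ t η * v (ouRot d S t x - η) := by
  have h := integral_sub_left_eq_self (G := EuclideanSpace ℝ (Fin d))
    (fun η => ouG d α δ t η * v (ouRot d S t x - η)) volume (ouRot d S t x)
  simp only [sub_sub_cancel] at h
  rw [ouT]
  simp_rw [ouH_eq_ouG]
  exact h

lemma ouRot_sub (d : ℕ) (S : Matrix (Fin d) (Fin d) ℝ) (τ : ℝ)
    (a b : EuclideanSpace ℝ (Fin d)) :
    ouRot d S τ (a - b) = ouRot d S τ a - ouRot d S τ b :=
  by simp [ouRot, Matrix.mulVec_sub]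

lemma ouRot_continuous (d : ℕ) {S : Matrix (Fin d) (Fin d) ℝ} (hS : S.transpose = -S) (τ : ℝ) :
    Continuous (ouRot d S τ) := (ouRotE d hS τ).continuous

set_option maxHeartbeats 1000000 in
lemma ouT_rot_eq (d : ℕ) (α δ : ℂ) {S : Matrix (Fin d) (Fin d) ℝ} (hS : S.transpose = -S)
    (t τ : ℝ) (v : EuclideanSpace ℝ (Fin d) → ℂ) (x : EuclideanSpace ℝ (Fin d)) :
    ouT d α δ S t v (ouRot d S τ x) =
      ∫ η, ouG d α δ t η * v (ouRot d S τ (ouRot d S t x - η)) := by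
  rw [ouT_eq, ouRot_add d S t τ x]
  have h := ouRot_integral_comp d hS τ
    (fun η => ouG d α δ t η * v (ouRot d S (t + τ) x - η))
  rw [← h]
  congr 1
  funext η
  rw [ouG_norm_eq d α δ t (ouRot_norm d hS τ η)]
  congr 2
  rw [ouRot_sub, ouRot_add, add_comm τ t]

set_option maxHeartbeats 1000000 in
/-- invariance of `C_ub` and `C_rub` under the Ornstein--Uhlenbeck semigroup. -/
theorem ouSemigroup_Cub_Crub_invariance
    (d : ℕ) (hd : 1 ≤ d) (α δ : ℂ) (hα : 0 < α.re)
    (S : Matrix (Fin d) (Fin d) ℝ) (hS : S.transpose = -S)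
    (t : ℝ) (ht : 0 < t)
    (v : EuclideanSpace ℝ (Fin d) → ℂ)
    (hvb : ∃ C : ℝ, ∀ x, ‖v x‖ ≤ C)
    (hvu : UniformContinuous v) :
    (UniformContinuous (ouT d α δ S t v) ∧
      ∃ C' : ℝ, ∀ x, ‖ouT d α δ S t v x‖ ≤ C') ∧
    (∀ τ : ℝ, ∀ x : EuclideanSpace ℝ (Fin d),
      ‖ouT d α δ S t v (ouRot d S τ x) - ouT d α δ S t v x‖
        ≤ (‖α‖ / α.re) ^ ((d : ℝ) / 2) * Real.exp (-δ.re * t) *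
          ⨆ y : EuclideanSpace ℝ (Fin d), ‖v (ouRot d S τ y) - v y‖) ∧
    (Filter.Tendsto
        (fun τ : ℝ => ⨆ x : EuclideanSpace ℝ (Fin d), ‖v (ouRot d S τ x) - v x‖)
        (nhds 0) (nhds 0) →
      Filter.Tendsto
        (fun τ : ℝ => ⨆ x : EuclideanSpace ℝ (Fin d),
          ‖ouT d α δ S t v (ouRot d S τ x) - ouT d α δ S t v x‖)
        (nhds 0) (nhds 0)) := by
  obtain ⟨C, hC⟩ := hvb
  have hC0 : 0 ≤ C := le_trans (norm_nonneg _) (hC 0)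
  have hvc : Continuous v := hvu.continuous
  have habs : 0 < ‖α‖ := by
    rw [norm_pos_iff]
    intro h; rw [h] at hα; simp at hα
  set K := (‖α‖ / α.re) ^ ((d : ℝ) / 2) * Real.exp (-δ.re * t) with hK
  have hK0 : 0 ≤ K := by positivity
  -- continuity facts
  have hwcont : ∀ y : EuclideanSpace ℝ (Fin d), Continuous (fun η => v (y - η)) :=
    fun y => hvc.comp (continuous_const.sub continuous_id)
  have hwrotcont : ∀ (τ : ℝ) (y : EuclideanSpace ℝ (Fin d)),
      Continuous (fun η => v (ouRot d S τ (y - η))) :=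
    fun τ y => hvc.comp ((ouRot_continuous d hS τ).comp (continuous_const.sub continuous_id))
  -- key rotation bound
  have hrot : ∀ τ : ℝ, ∀ x : EuclideanSpace ℝ (Fin d),
      ‖ouT d α δ S t v (ouRot d S τ x) - ouT d α δ S t v x‖
        ≤ K * ⨆ y : EuclideanSpace ℝ (Fin d), ‖v (ouRot d S τ y) - v y‖ := by
    intro τ x
    have hBdd : BddAbove (Set.range fun y => ‖v (ouRot d S τ y) - v y‖) := by
      refine ⟨C + C, ?_⟩
      rintro _ ⟨y, rfl⟩
      calc ‖v (ouRot d S τ y) - v y‖ = ‖v (ouRot d S τ y) - v y‖ := rfl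
        _ ≤ ‖v (ouRot d S τ y)‖ + ‖v y‖ := norm_sub_le _ _
        _ ≤ C + C := add_le_add (hC _) (hC _)
    set M := ⨆ y : EuclideanSpace ℝ (Fin d), ‖v (ouRot d S τ y) - v y‖ with hM
    have hdiff : ouT d α δ S t v (ouRot d S τ x) - ouT d α δ S t v x
        = ∫ η, ouG d α δ t η *
            (v (ouRot d S τ (ouRot d S t x - η)) - v (ouRot d S t x - η)) := by
      rw [ouT_rot_eq d α δ hS t τ v x, ouT_eq]
      rw [← integral_sub
        (integrable_ouG_mul d δ hα ht (hwrotcont τ (ouRot d S t x)) (fun y => hC _))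
        (integrable_ouG_mul d δ hα ht (hwcont (ouRot d S t x)) (fun y => hC _))]
      simp_rw [mul_sub]
    rw [hdiff]
    exact abs_integral_ouG_mul_le d δ hα ht
      ((hwrotcont τ (ouRot d S t x)).sub (hwcont (ouRot d S t x)))
      (fun η => le_ciSup hBdd (ouRot d S t x - η))
  refine ⟨⟨?_, ?_⟩, hrot, ?_⟩
  · -- uniform continuity
    rw [Metric.uniformContinuous_iff]
    intro ε hε
    obtain ⟨δ₀, hδ₀, hv⟩ := Metric.uniformContinuous_iff.mp hvu (ε / (K + 1)) (by positivity)
    refine ⟨δ₀, hδ₀, fun {a b} hab => ?_⟩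
    rw [Complex.dist_eq]
    have hdiff : ouT d α δ S t v a - ouT d α δ S t v b
        = ∫ η, ouG d α δ t η * (v (ouRot d S t a - η) - v (ouRot d S t b - η)) := by
      rw [ouT_eq, ouT_eq]
      rw [← integral_sub
        (integrable_ouG_mul d δ hα ht (hwcont (ouRot d S t a)) (fun y => hC _))
        (integrable_ouG_mul d δ hα ht (hwcont (ouRot d S t b)) (fun y => hC _))]
      simp_rw [mul_sub]
    rw [hdiff]
    have hbound : ∀ η, ‖v (ouRot d S t a - η) - v (ouRot d S t b - η)‖
        ≤ ε / (K + 1) := by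
      intro η
      apply le_of_lt
      rw [← dist_eq_norm]
      apply hv
      have : ouRot d S t a - η - (ouRot d S t b - η) = ouRot d S t (a - b) := by
        rw [ouRot_sub]; abel
      rw [dist_eq_norm, this, ouRot_norm d hS t, ← dist_eq_norm]
      exact hab
    calc ‖∫ η, ouG d α δ t η *
          (v (ouRot d S t a - η) - v (ouRot d S t b - η))‖
        ≤ K * (ε / (K + 1)) := abs_integral_ouG_mul_le d δ hα ht
            ((hwcont (ouRot d S t a)).sub (hwcont (ouRot d S t b))) hbound
      _ < ε := by
          rw [mul_div_assoc'] at *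
          rw [div_lt_iff₀ (by positivity)]
          nlinarith
  · -- boundedness
    refine ⟨K * C, fun x => ?_⟩
    rw [ouT_eq]
    exact abs_integral_ouG_mul_le d δ hα ht (hwcont (ouRot d S t x)) (fun y => hC _)
  · -- tendsto
    intro hG
    apply squeeze_zero (g := fun τ => K *
      ⨆ y : EuclideanSpace ℝ (Fin d), ‖v (ouRot d S τ y) - v y‖)
      (fun τ => Real.iSup_nonneg (fun x => norm_nonneg _))
      (fun τ => ciSup_le (fun x => hrot τ x))
    have := hG.const_mul K
    simpa using this
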